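/- Let x, h ∈ ℝ^n, let T₀ ⊆ {1,…,n}, let T̃₁,…,T̃_N ⊆ {1,…,n} be pairwise disjoint with union T̃, and let w₁,…,w_N ∈ [0,1]. If ‖x + h‖_{1,w} ≤ ‖x‖_{1,w}, then ‖h_{T₀ᶜ}‖₁ ≤ (Σ_{i=1}^N wᵢ − (N−1))‖h_{T₀}‖₁ + Σ_{i=1}^N (1−wᵢ)(‖h_{T̃ᵢᶜ∩T₀}‖₁ + ‖h_{T̃ᵢ∩T₀ᶜ}‖₁) + 2D. -/
import Mathlib


open Finset

/-- The restriction of a vector to a set of indices: agrees with `x` on `S`, zero elsewhere. -/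
noncomputable def restr {n : ℕ} (x : Fin n → ℝ) (S : Finset (Fin n)) : Fin n → ℝ :=
  fun i => if i ∈ S then x i else 0

/-- The ℓ1 norm of a vector in ℝ^n. -/
noncomputable def nrm1 {n : ℕ} (x : Fin n → ℝ) : ℝ := ∑ i, |x i|

/-- The ℓ2 (Euclidean) norm of a vector in ℝ^n. -/
noncomputable def nrm2 {n : ℕ} (x : Fin n → ℝ) : ℝ := Real.sqrt (∑ i, (x i) ^ 2)

/-- The weighted ℓ1 norm associated with support-estimate sets `T 1, …, T N`
(with weights `w 1, …, w N`), where weight `1` is used off `⋃ i, T i`. -/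
noncomputable def wl1 {n : ℕ} (N : ℕ) (T : ℕ → Finset (Fin n)) (w : ℕ → ℝ)
    (x : Fin n → ℝ) : ℝ :=
  ∑ i ∈ Finset.Icc 1 N, w i * nrm1 (restr x (T i)) +
    nrm1 (restr x ((Finset.Icc 1 N).biUnion T)ᶜ)

/-- `A` satisfies the restricted isometry bound with constant `δ` at sparsity level `k`. -/
def RIPBound {m n : ℕ} (A : Matrix (Fin m) (Fin n) ℝ) (δ : ℝ) (k : ℕ) : Prop :=
  ∀ v : Fin n → ℝ, (Finset.univ.filter fun i => v i ≠ 0).card ≤ k →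
    (1 - δ) * (nrm2 v) ^ 2 ≤ (nrm2 (A.mulVec v)) ^ 2 ∧
      (nrm2 (A.mulVec v)) ^ 2 ≤ (1 + δ) * (nrm2 v) ^ 2

/-- The constant `K_N` appearing in the multi-weight recovery guarantee. -/
noncomputable def KN (N : ℕ) (w ρ α : ℕ → ℝ) : ℝ :=
  w N + (1 - w 1) * Real.sqrt (1 + ∑ i ∈ Finset.Icc 1 N, (ρ i - 2 * α i * ρ i)) +
    ∑ j ∈ Finset.Icc 2 N, (w (j - 1) - w j) *
      Real.sqrt (1 + ∑ i ∈ Finset.Icc j N, (ρ i - 2 * α i * ρ i))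

/-- The quantity `D` appearing in the multi-weight error bounds. -/
noncomputable def DD {n : ℕ} (N : ℕ) (T : ℕ → Finset (Fin n)) (T₀ : Finset (Fin n))
    (w : ℕ → ℝ) (x : Fin n → ℝ) : ℝ :=
  (∑ i ∈ Finset.Icc 1 N, w i) * nrm1 (restr x T₀ᶜ) +
    (1 - ∑ i ∈ Finset.Icc 1 N, w i) *
      nrm1 (restr x (((Finset.Icc 1 N).biUnion T)ᶜ ∩ T₀ᶜ)) -
    ∑ i ∈ Finset.Icc 1 N, (∑ j ∈ (Finset.Icc 1 N).erase i, w j) *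
      nrm1 (restr x (T i ∩ T₀ᶜ))

/-- The set `S_j = (T₀ ∪ ⋃_{i=j}^N T̃ᵢ) \ ⋃_{i=j}^N (T̃ᵢ ∩ T₀)`. -/
def SS {n : ℕ} (N : ℕ) (T : ℕ → Finset (Fin n)) (T₀ : Finset (Fin n)) (j : ℕ) :
    Finset (Fin n) :=
  (T₀ ∪ (Finset.Icc j N).biUnion T) \ (Finset.Icc j N).biUnion (fun i => T i ∩ T₀)

private lemma abs_lb1 (u v : ℝ) : |u| - |v| ≤ |u + v| := by
  have h := abs_add_le (u + v) (-v)
  simp only [add_neg_cancel_right, abs_neg] at h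
  linarith

private lemma abs_lb2 (u v : ℝ) : |v| - |u| ≤ |u + v| := by
  have h := abs_add_le (u + v) (-u)
  have h2 : u + v + -u = v := by ring
  rw [h2, abs_neg] at h
  linarith

private lemma nrm1_restr {n : ℕ} (z : Fin n → ℝ) (S : Finset (Fin n)) :
    nrm1 (restr z S) = ∑ j ∈ S, |z j| := by
  classical
  unfold nrm1 restr
  calc (∑ j, |if j ∈ S then z j else 0|) = ∑ j, if j ∈ S then |z j| else 0 := by
        apply Finset.sum_congr rfl; intro j _; split <;> simp
    _ = ∑ j ∈ S, |z j| := by rw [Finset.sum_ite_mem, Finset.univ_inter]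

private lemma sum_split {n : ℕ} (S U : Finset (Fin n)) (f : Fin n → ℝ) :
    ∑ j ∈ S, f j = (∑ j ∈ S ∩ U, f j) + ∑ j ∈ S ∩ Uᶜ, f j := by
  have h2 : S \ U = S ∩ Uᶜ := by ext j; simp
  rw [← Finset.sum_inter_add_sum_sdiff S U f, h2]

private lemma sum_decomp {n N : ℕ} (T : ℕ → Finset (Fin n))
    (hdisj : ∀ i ∈ Finset.Icc 1 N, ∀ j ∈ Finset.Icc 1 N, i ≠ j → Disjoint (T i) (T j))
    (S : Finset (Fin n)) (f : Fin n → ℝ) :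
    ∑ j ∈ S, f j = (∑ i ∈ Finset.Icc 1 N, ∑ j ∈ T i ∩ S, f j)
      + ∑ j ∈ ((Finset.Icc 1 N).biUnion T)ᶜ ∩ S, f j := by
  classical
  rw [sum_split S ((Finset.Icc 1 N).biUnion T) f]
  congr 1
  · have h1 : S ∩ (Finset.Icc 1 N).biUnion T
        = (Finset.Icc 1 N).biUnion (fun i => T i ∩ S) := by
      ext j; simp [Finset.mem_biUnion]; tauto
    rw [h1, Finset.sum_biUnion]
    intro i hi j hj hij
    exact Finset.disjoint_left.mpr fun a ha ha' =>
      (Finset.disjoint_left.mp (hdisj i (Finset.mem_coe.mp hi) j (Finset.mem_coe.mp hj) hij))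
        (Finset.mem_inter.mp ha).1 (Finset.mem_inter.mp ha').1
  · rw [Finset.inter_comm]

/-- intermediate form of the cone constraint. -/
theorem cone_constraint_intermediate
    {n N : ℕ} (x h : Fin n → ℝ) (T₀ : Finset (Fin n)) (T : ℕ → Finset (Fin n))
    (hdisj : ∀ i ∈ Finset.Icc 1 N, ∀ j ∈ Finset.Icc 1 N, i ≠ j → Disjoint (T i) (T j))
    (w : ℕ → ℝ) (hw : ∀ i ∈ Finset.Icc 1 N, 0 ≤ w i ∧ w i ≤ 1)
    (hmin : wl1 N T w (x + h) ≤ wl1 N T w x) :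
    nrm1 (restr h T₀ᶜ) ≤
      ((∑ i ∈ Finset.Icc 1 N, w i) - ((N : ℝ) - 1)) * nrm1 (restr h T₀) +
        ∑ i ∈ Finset.Icc 1 N,
          (1 - w i) * (nrm1 (restr h ((T i)ᶜ ∩ T₀)) + nrm1 (restr h (T i ∩ T₀ᶜ))) +
        2 * DD N T T₀ w x := by
  classical
  -- expression for wl1 x
  have hx : wl1 N T w x =
      (∑ i ∈ Finset.Icc 1 N, w i * ((∑ j ∈ T i ∩ T₀, |x j|) + ∑ j ∈ T i ∩ T₀ᶜ, |x j|))
        + ((∑ j ∈ ((Finset.Icc 1 N).biUnion T)ᶜ ∩ T₀, |x j|)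
            + ∑ j ∈ ((Finset.Icc 1 N).biUnion T)ᶜ ∩ T₀ᶜ, |x j|) := by
    unfold wl1
    rw [nrm1_restr, sum_split (((Finset.Icc 1 N).biUnion T)ᶜ) T₀]
    congr 1
    apply Finset.sum_congr rfl
    intro i _
    rw [nrm1_restr, sum_split (T i) T₀]
  -- lower bound for wl1 (x + h)
  have key : ∀ S : Finset (Fin n),
      ((∑ j ∈ S ∩ T₀, |x j|) - ∑ j ∈ S ∩ T₀, |h j|)
        + ((∑ j ∈ S ∩ T₀ᶜ, |h j|) - ∑ j ∈ S ∩ T₀ᶜ, |x j|)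
      ≤ nrm1 (restr (x + h) S) := by
    intro S
    rw [nrm1_restr, sum_split S T₀ (fun j => |(x + h) j|)]
    have k1 : (∑ j ∈ S ∩ T₀, |x j|) - (∑ j ∈ S ∩ T₀, |h j|)
        ≤ ∑ j ∈ S ∩ T₀, |(x + h) j| := by
      rw [← Finset.sum_sub_distrib]
      apply Finset.sum_le_sum
      intro j _
      simpa [Pi.add_apply] using abs_lb1 (x j) (h j)
    have k2 : (∑ j ∈ S ∩ T₀ᶜ, |h j|) - (∑ j ∈ S ∩ T₀ᶜ, |x j|)
        ≤ ∑ j ∈ S ∩ T₀ᶜ, |(x + h) j| := by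
      rw [← Finset.sum_sub_distrib]
      apply Finset.sum_le_sum
      intro j _
      simpa [Pi.add_apply] using abs_lb2 (x j) (h j)
    linarith
  have hxph_low :
      (∑ i ∈ Finset.Icc 1 N, w i * (((∑ j ∈ T i ∩ T₀, |x j|) - ∑ j ∈ T i ∩ T₀, |h j|)
          + ((∑ j ∈ T i ∩ T₀ᶜ, |h j|) - ∑ j ∈ T i ∩ T₀ᶜ, |x j|)))
        + (((∑ j ∈ ((Finset.Icc 1 N).biUnion T)ᶜ ∩ T₀, |x j|)
              - ∑ j ∈ ((Finset.Icc 1 N).biUnion T)ᶜ ∩ T₀, |h j|)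
          + ((∑ j ∈ ((Finset.Icc 1 N).biUnion T)ᶜ ∩ T₀ᶜ, |h j|)
              - ∑ j ∈ ((Finset.Icc 1 N).biUnion T)ᶜ ∩ T₀ᶜ, |x j|))
      ≤ wl1 N T w (x + h) := by
    unfold wl1
    apply add_le_add
    · apply Finset.sum_le_sum
      intro i hi
      exact mul_le_mul_of_nonneg_left (key (T i)) (hw i hi).1
    · exact key (((Finset.Icc 1 N).biUnion T)ᶜ)
  have h1 := hxph_low.trans (hmin.trans_eq hx)
  simp only [mul_add, mul_sub, Finset.sum_add_distrib, Finset.sum_sub_distrib] at h1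
  -- the cone constraint in atomic form
  have star : (∑ i ∈ Finset.Icc 1 N, w i * ∑ j ∈ T i ∩ T₀ᶜ, |h j|)
        + (∑ j ∈ ((Finset.Icc 1 N).biUnion T)ᶜ ∩ T₀ᶜ, |h j|)
      ≤ (∑ i ∈ Finset.Icc 1 N, w i * ∑ j ∈ T i ∩ T₀, |h j|)
        + (∑ j ∈ ((Finset.Icc 1 N).biUnion T)ᶜ ∩ T₀, |h j|)
        + 2 * ((∑ i ∈ Finset.Icc 1 N, w i * ∑ j ∈ T i ∩ T₀ᶜ, |x j|)
            + ∑ j ∈ ((Finset.Icc 1 N).biUnion T)ᶜ ∩ T₀ᶜ, |x j|) := by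
    linarith
  -- rewrite the goal
  have hL : nrm1 (restr h T₀ᶜ)
      = (∑ i ∈ Finset.Icc 1 N, ∑ j ∈ T i ∩ T₀ᶜ, |h j|)
        + ∑ j ∈ ((Finset.Icc 1 N).biUnion T)ᶜ ∩ T₀ᶜ, |h j| := by
    rw [nrm1_restr]; exact sum_decomp T hdisj _ _
  have hT0 : nrm1 (restr h T₀)
      = (∑ i ∈ Finset.Icc 1 N, ∑ j ∈ T i ∩ T₀, |h j|)
        + ∑ j ∈ ((Finset.Icc 1 N).biUnion T)ᶜ ∩ T₀, |h j| := by
    rw [nrm1_restr]; exact sum_decomp T hdisj _ _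
  have hcompl : ∀ i, nrm1 (restr h ((T i)ᶜ ∩ T₀))
      = nrm1 (restr h T₀) - ∑ j ∈ T i ∩ T₀, |h j| := by
    intro i
    rw [nrm1_restr, nrm1_restr, sum_split T₀ (T i) (fun j => |h j|),
      Finset.inter_comm T₀ (T i), Finset.inter_comm T₀ (T i)ᶜ]
    ring
  have hterm : ∀ i ∈ Finset.Icc 1 N,
      (1 - w i) * (nrm1 (restr h ((T i)ᶜ ∩ T₀)) + nrm1 (restr h (T i ∩ T₀ᶜ)))
      = nrm1 (restr h T₀) - w i * nrm1 (restr h T₀)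
        - (∑ j ∈ T i ∩ T₀, |h j|) + w i * (∑ j ∈ T i ∩ T₀, |h j|)
        + ((∑ j ∈ T i ∩ T₀ᶜ, |h j|) - w i * ∑ j ∈ T i ∩ T₀ᶜ, |h j|) := by
    intro i _
    rw [hcompl i, nrm1_restr h (T i ∩ T₀ᶜ)]
    ring
  have hDD : DD N T T₀ w x
      = (∑ i ∈ Finset.Icc 1 N, w i * ∑ j ∈ T i ∩ T₀ᶜ, |x j|)
        + ∑ j ∈ ((Finset.Icc 1 N).biUnion T)ᶜ ∩ T₀ᶜ, |x j| := by
    unfold DD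
    have hd1 : nrm1 (restr x T₀ᶜ)
        = (∑ i ∈ Finset.Icc 1 N, ∑ j ∈ T i ∩ T₀ᶜ, |x j|)
          + ∑ j ∈ ((Finset.Icc 1 N).biUnion T)ᶜ ∩ T₀ᶜ, |x j| := by
      rw [nrm1_restr]; exact sum_decomp T hdisj _ _
    have hd2 : ∀ i ∈ Finset.Icc 1 N,
        (∑ j ∈ (Finset.Icc 1 N).erase i, w j) * nrm1 (restr x (T i ∩ T₀ᶜ))
        = (∑ j ∈ Finset.Icc 1 N, w j) * (∑ j ∈ T i ∩ T₀ᶜ, |x j|)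
          - w i * (∑ j ∈ T i ∩ T₀ᶜ, |x j|) := by
      intro i hi
      rw [nrm1_restr, Finset.sum_erase_eq_sub hi]
      ring
    rw [hd1, nrm1_restr, Finset.sum_congr rfl hd2]
    simp only [Finset.sum_sub_distrib, ← Finset.mul_sum]
    ring
  rw [hL, hDD, Finset.sum_congr rfl hterm]
  simp only [Finset.sum_add_distrib, Finset.sum_sub_distrib, Finset.sum_const,
    Nat.card_Icc, Nat.add_sub_cancel, nsmul_eq_mul, ← Finset.sum_mul]
  linarith [star, hT0]
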